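/- For any Hermitian positive definite D ∈ ℂ^{NQ×NQ} and g ∈ ℂ^{NQ} arising from the mixed-ADC model with K ≥ 1 (at least one antenna with a high-resolution ADC), in the simplified case where only the K selected antennas are used (antenna selection), the GMI equals −log((1/Q) Σ_q 1/(1 + ℰ_s Σ_{n ∈ S} |λ_{nq}|²)) for the selected set S with |S| = K, which tends to +∞ as ℰ_s → ∞ provided Σ_{n∈S} |λ_{nq}|² > 0 for every q. -/

import Mathlib

open Filter Topology

/-- For antenna selection with `K ≥ 1` high-resolution ADCs over the selected set `S`,
the GMI `−log((1/Q) Σ_q 1/(1 + ℰ_s Σ_{n∈S} |λ_{nq}|²))` tends to `+∞` as `ℰ_s → ∞`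
provided `Σ_{n∈S} |λ_{nq}|² > 0` for every subcarrier `q`. -/
theorem antenna_selection_gmi_unbounded (N Q K : ℕ) (hQ : 0 < Q) (hK : 1 ≤ K)
    (lam : Fin N → Fin Q → ℂ) (S : Finset (Fin N)) (hS : S.card = K)
    (hpos : ∀ q : Fin Q, 0 < ∑ n ∈ S, ‖lam n q‖ ^ 2) :
    Tendsto (fun Es : ℝ =>
        -Real.log ((1 / Q) * ∑ q : Fin Q, 1 / (1 + Es * ∑ n ∈ S, ‖lam n q‖ ^ 2)))
      atTop atTop := by
  have h0 : Tendsto (fun Es : ℝ =>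
      (1 / Q : ℝ) * ∑ q : Fin Q, 1 / (1 + Es * ∑ n ∈ S, ‖lam n q‖ ^ 2))
      atTop (𝓝[>] 0) := by
    apply tendsto_nhdsWithin_of_tendsto_nhds_of_eventually_within
    · have : Tendsto (fun Es : ℝ =>
          ∑ q : Fin Q, 1 / (1 + Es * ∑ n ∈ S, ‖lam n q‖ ^ 2)) atTop (𝓝 0) := by
        have := tendsto_finset_sum (Finset.univ : Finset (Fin Q))
          (f := fun (q : Fin Q) (Es : ℝ) => 1 / (1 + Es * ∑ n ∈ S, ‖lam n q‖ ^ 2))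
          (fun q _ => by
            apply Filter.Tendsto.div_atTop (tendsto_const_nhds)
            apply tendsto_atTop_add_const_left
            exact Tendsto.atTop_mul_const (hpos q) tendsto_id)
        simpa using this
      have := this.const_mul (1 / Q : ℝ)
      simpa using this
    · filter_upwards [eventually_ge_atTop (0 : ℝ)] with Es hEs
      have h1 : (0 : ℝ) < ∑ q : Fin Q, 1 / (1 + Es * ∑ n ∈ S, ‖lam n q‖ ^ 2) := by
        apply Finset.sum_pos
        · intro q _
          apply div_pos one_pos
          have := (hpos q).le
          nlinarith
        · have : Nonempty (Fin Q) := ⟨⟨0, hQ⟩⟩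
          exact Finset.univ_nonempty
      have h2 : (0 : ℝ) < 1 / Q := by positivity
      exact mul_pos h2 h1
  have h1 := Real.tendsto_log_nhdsGT_zero.comp h0
  have h2 := tendsto_neg_atBot_atTop.comp h1
  simpa [Function.comp_def] using h2
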